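/- Let P(z_1,...,z_N) be a homogeneous translation invariant symmetric polynomial admitting derived polynomials for fusions of initial segments of variables (sUFC). Then for each a < N, D_{a,1} = S_{a+1} - S_a, where D_{a,1} is the order of vanishing of the derived polynomial P_der(z^{(a)}, z_{a+1},...,z_N) along z^{(a)} = z_{a+1}, and S_a is the minimal total degree of P in z_1,...,z_a. -/
import Mathlib


open MvPolynomial

noncomputable section

/-- Variable type for the fusion of the first `a` variables: `Sum.inl i` are the
auxiliary variables `ξ i`, `Sum.inr none` is the fused variable (center of mass)
`z`, and `Sum.inr (some j)` are the untouched variables `z j` for `a ≤ j`. -/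
abbrev FVars (N : ℕ) := Fin N ⊕ Option (Fin N)

/-- The auxiliary variables `ξ i` for `i < a`, with the constraint `∑ ξ i = 0`
imposed by eliminating the last one. -/
def fuseXi (N a : ℕ) (i : Fin N) : MvPolynomial (FVars N) ℂ :=
  if i.val + 1 < a then X (Sum.inl i)
  else -(∑ j ∈ Finset.univ.filter (fun j : Fin N => j.val + 1 < a), X (Sum.inl j))

/-- Fusion substitution `z i = z + λ * ξ i` for `i < a`, where `λ` is the
polynomial variable and `z = X (Sum.inr none)`. -/
def fuse (N a : ℕ) : MvPolynomial (Fin N) ℂ →ₐ[ℂ] Polynomial (MvPolynomial (FVars N) ℂ) :=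
  MvPolynomial.aeval (fun i =>
    if i.val < a then Polynomial.C (X (Sum.inr none)) + Polynomial.X * Polynomial.C (fuseXi N a i)
    else Polynomial.C (X (Sum.inr (some i))))

/-- `Qcoeff N a P m` is the coefficient `Q^m` of `λ^m` in the fusion expansion of `P`. -/
def Qcoeff (N a : ℕ) (P : MvPolynomial (Fin N) ℂ) (m : ℕ) : MvPolynomial (FVars N) ℂ :=
  (fuse N a P).coeff m

/-- `minDeg N P a` is `S_a`: the minimal total degree of `P` in `z 1, ..., z a`. -/
def minDeg (N : ℕ) (P : MvPolynomial (Fin N) ℂ) (a : ℕ) : ℕ :=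
  sInf {d | ∃ mo ∈ P.support, d = ∑ i ∈ Finset.univ.filter (fun i : Fin N => i.val < a), mo i}

/-- Translation invariance of a multivariate polynomial. -/
def TransInv (N : ℕ) (P : MvPolynomial (Fin N) ℂ) : Prop :=
  ∀ c : ℂ, MvPolynomial.aeval (fun i : Fin N => X i + MvPolynomial.C c) P = P

/-- Symmetry of a multivariate polynomial. -/
def SymmPoly (N : ℕ) (P : MvPolynomial (Fin N) ℂ) : Prop :=
  ∀ σ : Equiv.Perm (Fin N), rename ⇑σ P = P

namespace Stmt10Aux

/-- generic translation invariance: the one-variable shift polynomial identity. -/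
lemma transInv_poly {N : ℕ} {P : MvPolynomial (Fin N) ℂ} (hTI : TransInv N P) :
    MvPolynomial.aeval
      (fun i : Fin N => (Polynomial.C (X i) + Polynomial.X :
        Polynomial (MvPolynomial (Fin N) ℂ))) P = Polynomial.C P := by
  set Φ : MvPolynomial (Fin N) ℂ →ₐ[ℂ] Polynomial (MvPolynomial (Fin N) ℂ) :=
    MvPolynomial.aeval (fun i : Fin N => (Polynomial.C (X i) + Polynomial.X)) with hΦ
  set q : Polynomial (MvPolynomial (Fin N) ℂ) := Φ P - Polynomial.C P with hq
  have hroot : ∀ c : ℂ, q.IsRoot (MvPolynomial.C c) := by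
    intro c
    have hE : ∀ r : Polynomial (MvPolynomial (Fin N) ℂ),
        Polynomial.eval (MvPolynomial.C c) r =
          ((Polynomial.aeval (MvPolynomial.C c : MvPolynomial (Fin N) ℂ)).restrictScalars ℂ) r :=
      fun r => by simp [Polynomial.coe_aeval_eq_eval]
    have hcomp : (((Polynomial.aeval (MvPolynomial.C c : MvPolynomial (Fin N) ℂ)).restrictScalars
          ℂ).comp Φ) = MvPolynomial.aeval (fun i : Fin N => X i + MvPolynomial.C c) := by
      rw [hΦ, MvPolynomial.comp_aeval]
      congr 1
      funext i
      simp
    have : ((Polynomial.aeval (MvPolynomial.C c : MvPolynomial (Fin N) ℂ)).restrictScalars ℂ)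
        (Φ P) = P := by
      rw [← AlgHom.comp_apply, hcomp, hTI c]
    show Polynomial.eval _ q = 0
    rw [hq, hE, map_sub, this]
    simp
  have hq0 : q = 0 := by
    apply Polynomial.eq_zero_of_infinite_isRoot
    apply Set.infinite_of_injective_forall_mem (f := fun c : ℂ => (MvPolynomial.C c :
      MvPolynomial (Fin N) ℂ))
    · exact fun a b hab => MvPolynomial.C_injective _ _ hab
    · exact hroot
  have := sub_eq_zero.mp hq0
  exact this

/-- Translation invariance for arbitrary shifts in arbitrary algebras. -/
lemma transInv_shift {N : ℕ} {P : MvPolynomial (Fin N) ℂ} (hTI : TransInv N P)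
    {A : Type*} [CommRing A] [Algebra ℂ A] (t : Fin N → A) (s : A) :
    MvPolynomial.aeval (fun i => t i + s) P = MvPolynomial.aeval t P := by
  set E : Polynomial (MvPolynomial (Fin N) ℂ) →ₐ[ℂ] A :=
    ((Polynomial.aeval s).restrictScalars ℂ).comp (Polynomial.mapAlgHom (MvPolynomial.aeval t))
    with hE
  have h1 : E.comp (MvPolynomial.aeval
      (fun i : Fin N => (Polynomial.C (X i) + Polynomial.X :
        Polynomial (MvPolynomial (Fin N) ℂ)))) = MvPolynomial.aeval (fun i => t i + s) := by
    rw [MvPolynomial.comp_aeval]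
    congr 1
    funext i
    simp [hE, Polynomial.coe_mapAlgHom]
  have h2 := transInv_poly hTI
  calc MvPolynomial.aeval (fun i => t i + s) P
      = E (MvPolynomial.aeval (fun i : Fin N => (Polynomial.C (X i) + Polynomial.X :
          Polynomial (MvPolynomial (Fin N) ℂ))) P) := by rw [← h1]; rfl
    _ = E (Polynomial.C P) := by rw [h2]
    _ = Polynomial.aeval s (Polynomial.map ((MvPolynomial.aeval t : MvPolynomial (Fin N) ℂ →ₐ[ℂ] A) : MvPolynomial (Fin N) ℂ →+* A) (Polynomial.C P)) := rfl
    _ = Polynomial.aeval s (Polynomial.C (MvPolynomial.aeval t P)) := by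
        rw [Polynomial.map_C]
        rfl
    _ = MvPolynomial.aeval t P := by
        rw [Polynomial.aeval_C]
        simp [MvPolynomial.aeval_def]


variable {σ τ : Type*}

/-- `HH e u q n` : every monomial of the coefficient of `λ^k` in `q` has
`u`-weighted degree `n - e*k` (stated without subtraction). -/
def HH (e : ℕ) (u : τ → ℕ) (q : Polynomial (MvPolynomial τ ℂ)) (n : ℕ) : Prop :=
  ∀ (k : ℕ) (mo : τ →₀ ℕ), (q.coeff k).coeff mo ≠ 0 →
    e * k + (Finsupp.weight u) mo = n

lemma HH.mul {e : ℕ} {u : τ → ℕ} {p q : Polynomial (MvPolynomial τ ℂ)} {n m : ℕ}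
    (hp : HH e u p n) (hq : HH e u q m) : HH e u (p * q) (n + m) := by
  classical
  intro k mo h
  rw [Polynomial.coeff_mul] at h
  rw [MvPolynomial.coeff_sum] at h
  obtain ⟨⟨i, j⟩, hij, hne⟩ := Finset.exists_ne_zero_of_sum_ne_zero h
  have hij' : i + j = k := Finset.HasAntidiagonal.mem_antidiagonal.mp hij
  have hmem : mo ∈ (p.coeff i * q.coeff j).support := MvPolynomial.mem_support_iff.mpr hne
  have := MvPolynomial.support_mul (p.coeff i) (q.coeff j) hmem
  rw [Finset.mem_add] at this
  obtain ⟨mo1, hmo1, mo2, hmo2, rfl⟩ := this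
  have h1 := hp i mo1 (MvPolynomial.mem_support_iff.mp hmo1)
  have h2 := hq j mo2 (MvPolynomial.mem_support_iff.mp hmo2)
  rw [map_add]
  have hek : e * k = e * i + e * j := by rw [← hij']; ring
  omega

lemma HH.one {e : ℕ} {u : τ → ℕ} : HH e u (1 : Polynomial (MvPolynomial τ ℂ)) 0 := by
  classical
  intro k mo h
  rcases Nat.eq_zero_or_pos k with rfl | hk
  · rw [Polynomial.coeff_one, if_pos rfl, MvPolynomial.coeff_one] at h
    split_ifs at h with h1
    · rw [← h1]; simp
    · exact absurd rfl h
  · rw [Polynomial.coeff_one, if_neg (by omega)] at h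
    simp at h

lemma HH.pow {e : ℕ} {u : τ → ℕ} {p : Polynomial (MvPolynomial τ ℂ)} {n : ℕ}
    (hp : HH e u p n) : ∀ j : ℕ, HH e u (p ^ j) (j * n)
  | 0 => by simpa using HH.one
  | (j + 1) => by
      have := (HH.pow hp j).mul hp
      rw [pow_succ]
      convert this using 1
      ring

lemma HH.aeval_monomial {e : ℕ} {u : τ → ℕ} (g : σ → Polynomial (MvPolynomial τ ℂ))
    (nn : σ → ℕ) (hg : ∀ i, HH e u (g i) (nn i)) (mo : σ →₀ ℕ) (c : ℂ) :
    HH e u (MvPolynomial.aeval g (MvPolynomial.monomial mo c)) ((Finsupp.weight nn) mo) := by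
  classical
  rw [MvPolynomial.aeval_monomial]
  have hprod : ∀ s : Finset σ, HH e u (∏ i ∈ s, g i ^ mo i) (∑ i ∈ s, mo i * nn i) := by
    intro s
    induction s using Finset.induction_on with
    | empty => simpa using HH.one
    | @insert x s' hx ih =>
        rw [Finset.prod_insert hx, Finset.sum_insert hx]
        exact ((hg x).pow (mo x)).mul ih
  have hC : ∀ (q : Polynomial (MvPolynomial τ ℂ)) (n : ℕ), HH e u q n →
      HH e u (algebraMap ℂ _ c * q) n := by
    intro q n hq k mo' h
    apply hq k mo'
    intro h0
    apply h
    have : (algebraMap ℂ (Polynomial (MvPolynomial τ ℂ)) c * q).coeff k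
        = MvPolynomial.C c * q.coeff k := by
      rw [show (algebraMap ℂ (Polynomial (MvPolynomial τ ℂ)) c)
        = Polynomial.C (MvPolynomial.C c) from rfl, Polynomial.coeff_C_mul]
    rw [this, MvPolynomial.coeff_C_mul, h0, mul_zero]
  have hweq : (Finsupp.weight nn) mo = ∑ i ∈ mo.support, mo i * nn i := by
    simp [Finsupp.weight_apply, Finsupp.sum, smul_eq_mul]
  rw [hweq, Finsupp.prod]
  exact hC _ _ (hprod mo.support)

lemma HH.aeval {e : ℕ} {u : τ → ℕ} (g : σ → Polynomial (MvPolynomial τ ℂ))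
    (nn : σ → ℕ) (hg : ∀ i, HH e u (g i) (nn i)) {P : MvPolynomial σ ℂ} {m : ℕ}
    (hP : P.IsWeightedHomogeneous nn m) : HH e u (MvPolynomial.aeval g P) m := by
  intro k mo h
  rw [MvPolynomial.as_sum P, map_sum, Polynomial.finset_sum_coeff,
    MvPolynomial.coeff_sum] at h
  obtain ⟨mo', hmo', hne⟩ := Finset.exists_ne_zero_of_sum_ne_zero h
  have := HH.aeval_monomial g nn hg mo' (MvPolynomial.coeff mo' P) k mo hne
  rwa [hP (MvPolynomial.mem_support_iff.mp hmo')] at this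


/-- If `q` is weighted homogeneous of degree `m`, `q ≠ 0` and `q * p` is weighted
homogeneous of degree `n`, then every monomial of `p` has weighted degree `n - m`. -/
lemma homog_factor {w : τ → ℕ} {q p : MvPolynomial τ ℂ} {m n : ℕ}
    (hq : q.IsWeightedHomogeneous w m) (hqp : (q * p).IsWeightedHomogeneous w n)
    (hq0 : q ≠ 0) : ∀ mo : τ →₀ ℕ, p.coeff mo ≠ 0 → m + (Finsupp.weight w) mo = n := by
  classical
  intro mo hmo
  set j : ℕ := (Finsupp.weight w) mo with hj
  have key : q * (weightedHomogeneousComponent w j p) =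
      weightedHomogeneousComponent w (m + j) (q * p) := by
    conv_rhs => rw [MvPolynomial.as_sum p]
    rw [Finset.mul_sum, map_sum]
    conv_lhs => rw [MvPolynomial.as_sum p, map_sum, Finset.mul_sum]
    refine Finset.sum_congr rfl fun mo' _ => ?_
    have h1 : (weightedHomogeneousComponent w j) ((MvPolynomial.monomial mo') (p.coeff mo'))
        = if j = (Finsupp.weight w) mo' then (MvPolynomial.monomial mo') (p.coeff mo') else 0 :=
      weightedHomogeneousComponent_of_mem
        (isWeightedHomogeneous_monomial w mo' (p.coeff mo') rfl)
    have h2 : (weightedHomogeneousComponent w (m + j))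
        (q * (MvPolynomial.monomial mo') (p.coeff mo'))
        = if m + j = m + (Finsupp.weight w) mo' then
            q * (MvPolynomial.monomial mo') (p.coeff mo') else 0 :=
      weightedHomogeneousComponent_of_mem
        (hq.mul (isWeightedHomogeneous_monomial w mo' (p.coeff mo') rfl))
    rw [h1, h2]
    by_cases hcond : j = (Finsupp.weight w) mo'
    · rw [if_pos hcond, if_pos (by omega)]
    · rw [if_neg hcond, if_neg (by omega), mul_zero]
  have hwne : weightedHomogeneousComponent w j p ≠ 0 := by
    intro h0
    have := coeff_weightedHomogeneousComponent (w := w) (n := j) (φ := p) mo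
    rw [h0, if_pos hj.symm] at this
    simp only [MvPolynomial.coeff_zero] at this
    exact hmo this.symm
  have hprod : q * (weightedHomogeneousComponent w j p) ≠ 0 := mul_ne_zero hq0 hwne
  by_contra hne
  have h0 : weightedHomogeneousComponent w (m + j) (q * p) = 0 :=
    hqp.weightedHomogeneousComponent_ne (m + j) (by omega)
  rw [key, h0] at hprod
  exact hprod rfl

/-- Substitution by weighted homogeneous images preserves weighted homogeneity. -/
lemma homog_aeval {w : τ → ℕ} {w' : σ → ℕ} {g : σ → MvPolynomial τ ℂ}
    (hg : ∀ i, (g i).IsWeightedHomogeneous w (w' i)) {p : MvPolynomial σ ℂ} {m : ℕ}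
    (hp : p.IsWeightedHomogeneous w' m) :
    (MvPolynomial.aeval g p).IsWeightedHomogeneous w m := by
  classical
  have hpow : ∀ (i : σ) (k : ℕ), ((g i) ^ k).IsWeightedHomogeneous w (k * w' i) := by
    intro i k
    induction k with
    | zero => simpa using isWeightedHomogeneous_one ℂ w
    | succ k ih =>
        rw [pow_succ, Nat.succ_mul]
        exact ih.mul (hg i)
  rw [MvPolynomial.as_sum p, map_sum]
  apply IsWeightedHomogeneous.sum
  intro mo hmo
  rw [MvPolynomial.aeval_monomial]
  have h1 : (Finsupp.prod mo fun i k => g i ^ k).IsWeightedHomogeneous w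
      ((Finsupp.weight w') mo) := by
    rw [Finsupp.prod]
    have := IsWeightedHomogeneous.prod mo.support (fun i => g i ^ mo i)
      (fun i => mo i * w' i) (w := w) (fun i _ => hpow i (mo i))
    have hweq : (Finsupp.weight w') mo = ∑ i ∈ mo.support, mo i * w' i := by
      simp [Finsupp.weight_apply, Finsupp.sum, smul_eq_mul]
    rwa [hweq]
  have h2 : (algebraMap ℂ (MvPolynomial τ ℂ)) (p.coeff mo) = MvPolynomial.C (p.coeff mo) := rfl
  rw [h2, hp (MvPolynomial.mem_support_iff.mp hmo)] at *
  have := (isWeightedHomogeneous_C w (p.coeff mo) (R := ℂ)).mul h1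
  simpa using this




/-- weight function on fusion variables: `ξ` variables have weight 0, `z` variables weight 1. -/
def wz (N : ℕ) : FVars N → ℕ := Sum.elim (fun _ => 0) (fun _ => 1)

/-- weight function on original variables counting only the first `b`. -/
def ua (N b : ℕ) : Fin N → ℕ := fun i => if i.val < b then 1 else 0

/-- the substitution recording the lowest-order fusion data. -/
def theta (N b : ℕ) : Fin N → MvPolynomial (FVars N) ℂ := fun i =>
  if i.val < b then fuseXi N b i else (X (Sum.inr (some i)) - X (Sum.inr none))

/-- the recentered fusion substitution. -/
def hmap (N b : ℕ) : Fin N → Polynomial (MvPolynomial (FVars N) ℂ) := fun i =>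
  Polynomial.X ^ (ua N b i) * Polynomial.C (theta N b i)

lemma fuse_eq_hmap {N b : ℕ} {P : MvPolynomial (Fin N) ℂ} (hTI : TransInv N P) :
    fuse N b P = MvPolynomial.aeval (hmap N b) P := by
  have hfun : (fun i : Fin N =>
      if i.val < b then Polynomial.C (X (Sum.inr none)) + Polynomial.X * Polynomial.C (fuseXi N b i)
      else Polynomial.C (X (Sum.inr (some i : Option (Fin N)))))
      = fun i => hmap N b i + Polynomial.C (X (Sum.inr none)) := by
    funext i
    unfold hmap theta ua
    by_cases hi : i.val < b
    · rw [if_pos hi, if_pos hi, if_pos hi, pow_one]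
      ring
    · rw [if_neg hi, if_neg hi, if_neg hi, pow_zero, one_mul, ← map_add, sub_add_cancel]
  show MvPolynomial.aeval _ P = _
  rw [hfun, transInv_shift hTI (hmap N b) (Polynomial.C (X (Sum.inr none)))]

lemma weight_single {τ : Type*} (u : τ → ℕ) (i : τ) :
    (Finsupp.weight u) (Finsupp.single i 1) = u i := by
  rw [Finsupp.weight_apply, Finsupp.sum_single_index] <;> simp

lemma fuseXi_homog (N b : ℕ) (i : Fin N) :
    (fuseXi N b i).IsWeightedHomogeneous (wz N) 0 := by
  unfold fuseXi
  split_ifs with h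
  · exact isWeightedHomogeneous_X ℂ (wz N) (Sum.inl i)
  · rw [← mem_weightedHomogeneousSubmodule]
    apply Submodule.neg_mem
    apply Submodule.sum_mem
    intro j hj
    exact isWeightedHomogeneous_X ℂ (wz N) (Sum.inl j)

lemma HH_fuse_map (N b : ℕ) (i : Fin N) :
    HH 1 (wz N)
      (if i.val < b then Polynomial.C (X (Sum.inr none)) + Polynomial.X * Polynomial.C (fuseXi N b i)
       else Polynomial.C (X (Sum.inr (some i : Option (Fin N))))) 1 := by
  by_cases hi : i.val < b
  · rw [if_pos hi]
    intro k mo h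
    match k with
    | 0 =>
        rw [Polynomial.coeff_add, Polynomial.coeff_C, if_pos rfl, Polynomial.mul_coeff_zero,
          Polynomial.coeff_X_zero, zero_mul, add_zero] at h
        rw [MvPolynomial.coeff_X'] at h
        split_ifs at h with h1
        · rw [← h1, weight_single]
          rfl
        · exact absurd rfl h
    | 1 =>
        rw [Polynomial.coeff_add, Polynomial.coeff_C, if_neg one_ne_zero, zero_add,
          Polynomial.coeff_X_mul, Polynomial.coeff_C, if_pos rfl] at h
        have := fuseXi_homog N b i h
        omega
    | (k + 2) =>
        rw [Polynomial.coeff_add, Polynomial.coeff_C, if_neg (by omega), zero_add,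
          show k + 2 = (k + 1) + 1 from rfl, Polynomial.coeff_X_mul, Polynomial.coeff_C,
          if_neg (by omega)] at h
        simp at h
  · rw [if_neg hi]
    intro k mo h
    rw [Polynomial.coeff_C] at h
    split_ifs at h with h1
    · rw [MvPolynomial.coeff_X'] at h
      split_ifs at h with h2
      · rw [← h2, weight_single, h1]
        rfl
      · exact absurd rfl h
    · simp at h

lemma Qcoeff_supp {N b d : ℕ} {P : MvPolynomial (Fin N) ℂ} (hhom : P.IsHomogeneous d)
    (m : ℕ) (mo : FVars N →₀ ℕ) (h : (Qcoeff N b P m).coeff mo ≠ 0) :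
    m + (Finsupp.weight (wz N)) mo = d := by
  have hH : HH 1 (wz N) (fuse N b P) d := by
    apply HH.aeval _ (fun _ : Fin N => 1) (fun i => HH_fuse_map N b i)
    exact hhom
  have := hH m mo h
  omega

lemma aeval_hmap_monomial (N b : ℕ) (mo : Fin N →₀ ℕ) (c : ℂ) :
    MvPolynomial.aeval (hmap N b) (MvPolynomial.monomial mo c) =
      Polynomial.monomial ((Finsupp.weight (ua N b)) mo)
        (MvPolynomial.aeval (theta N b) (MvPolynomial.monomial mo c)) := by
  classical
  rw [MvPolynomial.aeval_monomial, MvPolynomial.aeval_monomial]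
  have h1 : (Finsupp.prod mo fun i k => hmap N b i ^ k) =
      Polynomial.X ^ (∑ i ∈ mo.support, ua N b i * mo i) *
        Polynomial.C (Finsupp.prod mo fun i k => theta N b i ^ k) := by
    rw [Finsupp.prod, Finsupp.prod]
    have : ∀ i ∈ mo.support, hmap N b i ^ mo i =
        Polynomial.X ^ (ua N b i * mo i) * Polynomial.C (theta N b i ^ mo i) := by
      intro i _
      rw [hmap, mul_pow, ← pow_mul, ← Polynomial.C_pow]
    rw [Finset.prod_congr rfl this, Finset.prod_mul_distrib, ← map_prod,
      Finset.prod_pow_eq_pow_sum]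
  rw [h1]
  have h2 : (algebraMap ℂ (Polynomial (MvPolynomial (FVars N) ℂ))) c =
      Polynomial.C (MvPolynomial.C c) := rfl
  have h3 : (algebraMap ℂ (MvPolynomial (FVars N) ℂ)) c = MvPolynomial.C c := rfl
  rw [h2, h3]
  have h4 : (Finsupp.weight (ua N b)) mo = ∑ i ∈ mo.support, ua N b i * mo i := by
    simp [Finsupp.weight_apply, Finsupp.sum, smul_eq_mul, mul_comm]
  rw [h4, ← Polynomial.C_mul_X_pow_eq_monomial, map_mul]
  ring

lemma coeff_aeval_hmap (N b : ℕ) (P : MvPolynomial (Fin N) ℂ) (m : ℕ) :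
    (MvPolynomial.aeval (hmap N b) P).coeff m =
      MvPolynomial.aeval (theta N b)
        (weightedHomogeneousComponent (ua N b) m P) := by
  classical
  conv_lhs => rw [MvPolynomial.as_sum P]
  conv_rhs => rw [MvPolynomial.as_sum P]
  rw [map_sum, Polynomial.finset_sum_coeff, map_sum, map_sum]
  refine Finset.sum_congr rfl fun mo _ => ?_
  rw [aeval_hmap_monomial, Polynomial.coeff_monomial,
    weightedHomogeneousComponent_of_mem (isWeightedHomogeneous_monomial _ _ _ rfl),
    apply_ite (MvPolynomial.aeval (theta N b)), map_zero]
  exact if_congr eq_comm rfl rfl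

lemma weight_ua_eq (N b : ℕ) (mo : Fin N →₀ ℕ) :
    (Finsupp.weight (ua N b)) mo =
      ∑ i ∈ Finset.univ.filter (fun i : Fin N => i.val < b), mo i := by
  classical
  rw [Finsupp.weight_apply, Finsupp.sum]
  rw [Finset.sum_subset (Finset.subset_univ mo.support)
    (fun i _ hi => by rw [Finsupp.notMem_support_iff.mp hi]; simp)]
  rw [Finset.sum_filter]
  refine Finset.sum_congr rfl fun i _ => ?_
  unfold ua
  split_ifs with h <;> simp

lemma minDeg_exists {N b : ℕ} {P : MvPolynomial (Fin N) ℂ} (hP : P ≠ 0) :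
    ∃ mo ∈ P.support, (Finsupp.weight (ua N b)) mo = minDeg N P b := by
  have hne : {d | ∃ mo ∈ P.support, d = ∑ i ∈ Finset.univ.filter
      (fun i : Fin N => i.val < b), mo i}.Nonempty := by
    obtain ⟨mo, hmo⟩ := (MvPolynomial.support_nonempty).mpr hP
    exact ⟨_, mo, hmo, rfl⟩
  obtain ⟨mo, hmo, heq⟩ := Nat.sInf_mem hne
  exact ⟨mo, hmo, by rw [weight_ua_eq, ← heq]; rfl⟩

lemma minDeg_le {N b : ℕ} {P : MvPolynomial (Fin N) ℂ} {mo : Fin N →₀ ℕ}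
    (hmo : mo ∈ P.support) : minDeg N P b ≤ (Finsupp.weight (ua N b)) mo := by
  rw [weight_ua_eq]
  exact Nat.sInf_le ⟨mo, hmo, rfl⟩


/-- the partial shift of the first `b` variables by the polynomial variable. -/
def psia (N b : ℕ) : Fin N → Polynomial (MvPolynomial (Fin N) ℂ) := fun i =>
  Polynomial.C (X i) + (if i.val < b then Polynomial.X else 0)

/-- the partial shift of the last `N - b` variables by minus the polynomial variable. -/
def psib (N b : ℕ) : Fin N → Polynomial (MvPolynomial (Fin N) ℂ) := fun i =>
  Polynomial.C (X i) + (if i.val < b then 0 else -Polynomial.X)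

lemma HH_psia (N b : ℕ) (i : Fin N) : HH 1 (ua N b) (psia N b i) (ua N b i) := by
  unfold psia
  by_cases hi : i.val < b
  · rw [if_pos hi]
    intro k mo h
    match k with
    | 0 =>
        rw [Polynomial.coeff_add, Polynomial.coeff_C, if_pos rfl, Polynomial.coeff_X_zero,
          add_zero, MvPolynomial.coeff_X'] at h
        split_ifs at h with h1
        · rw [← h1, weight_single]
          unfold ua
          rw [if_pos hi]
        · exact absurd rfl h
    | 1 =>
        rw [Polynomial.coeff_add, Polynomial.coeff_C, if_neg one_ne_zero, zero_add,
          Polynomial.coeff_X_one, MvPolynomial.coeff_one] at h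
        split_ifs at h with h1
        · rw [← h1]
          simp [ua, if_pos hi]
        · exact absurd rfl h
    | (k + 2) =>
        rw [Polynomial.coeff_add, Polynomial.coeff_C, if_neg (by omega), zero_add,
          Polynomial.coeff_X, if_neg (by omega)] at h
        simp at h
  · rw [if_neg hi, add_zero]
    intro k mo h
    rw [Polynomial.coeff_C] at h
    split_ifs at h with h1
    · rw [MvPolynomial.coeff_X'] at h
      split_ifs at h with h2
      · rw [← h2, weight_single, h1]
        simp [ua, if_neg hi]
      · exact absurd rfl h
    · simp at h

lemma HH_psib (N b : ℕ) (i : Fin N) : HH 0 (ua N b) (psib N b i) (ua N b i) := by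
  unfold psib
  by_cases hi : i.val < b
  · rw [if_pos hi, add_zero]
    intro k mo h
    rw [Polynomial.coeff_C] at h
    split_ifs at h with h1
    · rw [MvPolynomial.coeff_X'] at h
      split_ifs at h with h2
      · rw [← h2, weight_single]
        simp [ua, if_pos hi]
      · exact absurd rfl h
    · simp at h
  · rw [if_neg hi]
    intro k mo h
    match k with
    | 0 =>
        rw [Polynomial.coeff_add, Polynomial.coeff_C, if_pos rfl, Polynomial.coeff_neg,
          Polynomial.coeff_X_zero, neg_zero, add_zero, MvPolynomial.coeff_X'] at h
        split_ifs at h with h1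
        · rw [← h1, weight_single]
          simp [ua, if_neg hi]
        · exact absurd rfl h
    | 1 =>
        rw [Polynomial.coeff_add, Polynomial.coeff_C, if_neg one_ne_zero, zero_add,
          Polynomial.coeff_neg, Polynomial.coeff_X_one, MvPolynomial.coeff_neg,
          MvPolynomial.coeff_one, neg_ne_zero] at h
        split_ifs at h with h1
        · rw [← h1]
          simp [ua, if_neg hi]
        · exact absurd rfl h
    | (k + 2) =>
        rw [Polynomial.coeff_add, Polynomial.coeff_C, if_neg (by omega), zero_add,
          Polynomial.coeff_neg, Polynomial.coeff_X, if_neg (by omega)] at h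
        simp at h

lemma psia_eq_psib {N b : ℕ} {P : MvPolynomial (Fin N) ℂ} (hTI : TransInv N P) :
    MvPolynomial.aeval (psia N b) P = MvPolynomial.aeval (psib N b) P := by
  have hfun : psia N b = fun i => psib N b i + Polynomial.X := by
    funext i
    unfold psia psib
    split_ifs with hi <;> ring
  rw [hfun, transInv_shift hTI (psib N b) Polynomial.X]

lemma coeff_zero_aeval_psia {N b : ℕ} (q : MvPolynomial (Fin N) ℂ) :
    (MvPolynomial.aeval (psia N b) q).coeff 0 = q := by
  set E : Polynomial (MvPolynomial (Fin N) ℂ) →ₐ[ℂ] MvPolynomial (Fin N) ℂ :=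
    (Polynomial.aeval (0 : MvPolynomial (Fin N) ℂ)).restrictScalars ℂ with hE
  have hEcoeff : ∀ r : Polynomial (MvPolynomial (Fin N) ℂ), E r = r.coeff 0 := by
    intro r
    show Polynomial.aeval (0 : MvPolynomial (Fin N) ℂ) r = r.coeff 0
    rw [Polynomial.coe_aeval_eq_eval, Polynomial.coeff_zero_eq_eval_zero]
  have h1 : E (MvPolynomial.aeval (psia N b) q) =
      MvPolynomial.aeval (fun i => E (psia N b i)) q :=
    MvPolynomial.comp_aeval_apply (psia N b) E q
  have h2 : (fun i => E (psia N b i)) = (X : Fin N → MvPolynomial (Fin N) ℂ) := by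
    funext i
    unfold psia
    rw [map_add]
    have hc : E (Polynomial.C (X i : MvPolynomial (Fin N) ℂ)) = X i := by
      show Polynomial.aeval (0 : MvPolynomial (Fin N) ℂ) _ = _
      rw [Polynomial.aeval_C]
      simp
    rw [hc, apply_ite E, map_zero]
    have hx : E Polynomial.X = 0 := by
      show Polynomial.aeval (0 : MvPolynomial (Fin N) ℂ) _ = _
      rw [Polynomial.aeval_X]
    rw [hx, ite_self, add_zero]
  rw [← hEcoeff, h1, h2, MvPolynomial.aeval_X_left_apply]

lemma Qcoeff_minDeg_ne_zero (N b : ℕ) (P : MvPolynomial (Fin N) ℂ)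
    (hP : P ≠ 0) (hTI : TransInv N P) : Qcoeff N b P (minDeg N P b) ≠ 0 := by
  classical
  obtain ⟨mo0, hmo0, hw0⟩ := minDeg_exists (b := b) hP
  set S := minDeg N P b with hS
  set u := ua N b with hu
  set Pmin := weightedHomogeneousComponent u S P with hPmin
  have hPminhom : Pmin.IsWeightedHomogeneous u S :=
    weightedHomogeneousComponent_isWeightedHomogeneous S P
  have hpsia : ∀ i, HH 1 u (psia N b i) (u i) := by rw [hu]; exact HH_psia N b
  have hpsib : ∀ i, HH 0 u (psib N b i) (u i) := by rw [hu]; exact HH_psib N b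
  have hPmin_ne : Pmin ≠ 0 := by
    intro h0
    have hc := coeff_weightedHomogeneousComponent (w := u) (n := S) mo0 (φ := P)
    rw [← hPmin, h0, if_pos hw0] at hc
    exact MvPolynomial.mem_support_iff.mp hmo0 (by simpa using hc.symm)
  intro hQ0
  apply hPmin_ne
  have hQeq : Qcoeff N b P S = MvPolynomial.aeval (theta N b) Pmin := by
    show (fuse N b P).coeff S = _
    rw [fuse_eq_hmap hTI, coeff_aeval_hmap]
  have hT : ∀ (mo : Fin N →₀ ℕ) (k : ℕ) (mo'' : Fin N →₀ ℕ),
      ((MvPolynomial.aeval (psia N b)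
        (MvPolynomial.monomial mo (P.coeff mo))).coeff k).coeff mo'' ≠ 0 →
      k + (Finsupp.weight u) mo'' = (Finsupp.weight u) mo := by
    intro mo k mo'' h
    have := HH.aeval_monomial (psia N b) u hpsia mo (P.coeff mo) k mo'' h
    omega
  have hT' : ∀ (mo : Fin N →₀ ℕ) (k : ℕ) (mo'' : Fin N →₀ ℕ),
      ((MvPolynomial.aeval (psib N b)
        (MvPolynomial.monomial mo (P.coeff mo))).coeff k).coeff mo'' ≠ 0 →
      (Finsupp.weight u) mo'' = (Finsupp.weight u) mo := by
    intro mo k mo'' h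
    have := HH.aeval_monomial (psib N b) u hpsib mo (P.coeff mo) k mo'' h
    omega
  have hPmin_sum : Pmin = ∑ mo ∈ P.support,
      (if S = (Finsupp.weight u) mo then MvPolynomial.monomial mo (P.coeff mo) else 0) := by
    rw [hPmin]
    conv_lhs => rw [MvPolynomial.as_sum P]
    rw [map_sum]
    exact Finset.sum_congr rfl fun mo _ =>
      weightedHomogeneousComponent_of_mem (isWeightedHomogeneous_monomial _ _ _ rfl)
  have key3 : ∀ k, 1 ≤ k → (MvPolynomial.aeval (psia N b) Pmin).coeff k = 0 := by
    intro k hk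
    by_cases hkS : S < k
    · by_contra h0
      obtain ⟨mo, hmo⟩ := MvPolynomial.ne_zero_iff.mp h0
      have := HH.aeval (psia N b) u hpsia hPminhom k mo hmo
      omega
    · push_neg at hkS
      have c1 : (MvPolynomial.aeval (psia N b) Pmin).coeff k = ∑ mo ∈ P.support,
          (if S = (Finsupp.weight u) mo then
            (MvPolynomial.aeval (psia N b)
              (MvPolynomial.monomial mo (P.coeff mo))).coeff k else 0) := by
        rw [hPmin_sum, map_sum, Polynomial.finset_sum_coeff]
        refine Finset.sum_congr rfl fun mo _ => ?_
        split_ifs with hcond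
        · rfl
        · rw [map_zero, Polynomial.coeff_zero]
      have c2 : ∀ mo ∈ P.support, (weightedHomogeneousComponent u (S - k))
          ((MvPolynomial.aeval (psia N b)
            (MvPolynomial.monomial mo (P.coeff mo))).coeff k)
          = (if S = (Finsupp.weight u) mo then
              (MvPolynomial.aeval (psia N b)
                (MvPolynomial.monomial mo (P.coeff mo))).coeff k else 0) := by
        intro mo _
        by_cases hcase : (Finsupp.weight u) mo = (S - k) + k
        · have hS' : S = (Finsupp.weight u) mo := by omega
          rw [if_pos hS']
          have hhom : IsWeightedHomogeneous u
              ((MvPolynomial.aeval (psia N b)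
                (MvPolynomial.monomial mo (P.coeff mo))).coeff k) (S - k) := by
            intro dd hdd
            have := hT mo k dd hdd
            omega
          rw [weightedHomogeneousComponent_of_mem hhom, if_pos rfl]
        · rw [if_neg (by omega)]
          by_cases hk2 : k ≤ (Finsupp.weight u) mo
          · have hhom : IsWeightedHomogeneous u
                ((MvPolynomial.aeval (psia N b)
                  (MvPolynomial.monomial mo (P.coeff mo))).coeff k)
                ((Finsupp.weight u) mo - k) := by
              intro dd hdd
              have := hT mo k dd hdd
              omega
            rw [weightedHomogeneousComponent_of_mem hhom, if_neg (by omega)]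
          · have h0 : ((MvPolynomial.aeval (psia N b)
                (MvPolynomial.monomial mo (P.coeff mo))).coeff k) = 0 := by
              by_contra hne
              obtain ⟨dd, hdd⟩ := MvPolynomial.ne_zero_iff.mp hne
              have := hT mo k dd hdd
              omega
            rw [h0, map_zero]
      have c3 : ∀ mo ∈ P.support, (weightedHomogeneousComponent u (S - k))
          ((MvPolynomial.aeval (psib N b)
            (MvPolynomial.monomial mo (P.coeff mo))).coeff k) = 0 := by
        intro mo hmo
        have hhom : IsWeightedHomogeneous u
            ((MvPolynomial.aeval (psib N b)
              (MvPolynomial.monomial mo (P.coeff mo))).coeff k)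
            ((Finsupp.weight u) mo) := fun dd hdd => hT' mo k dd hdd
        have hge : S ≤ (Finsupp.weight u) mo := by rw [hu]; exact minDeg_le hmo
        rw [weightedHomogeneousComponent_of_mem hhom, if_neg (by omega)]
      have hsum : (MvPolynomial.aeval (psia N b) Pmin).coeff k
          = (weightedHomogeneousComponent u (S - k))
              ((MvPolynomial.aeval (psia N b) P).coeff k) := by
        conv_rhs => rw [MvPolynomial.as_sum P]
        rw [map_sum, Polynomial.finset_sum_coeff, map_sum, c1]
        exact (Finset.sum_congr rfl c2).symm
      rw [hsum, psia_eq_psib hTI]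
      conv_lhs => rw [MvPolynomial.as_sum P]
      rw [map_sum, Polynomial.finset_sum_coeff, map_sum]
      exact Finset.sum_eq_zero c3
  have hinv : MvPolynomial.aeval (psia N b) Pmin = Polynomial.C Pmin := by
    apply Polynomial.ext
    intro k
    match k with
    | 0 => rw [coeff_zero_aeval_psia, Polynomial.coeff_C, if_pos rfl]
    | (k + 1) => rw [key3 (k + 1) (by omega), Polynomial.coeff_C, if_neg (by omega)]
  set zsum : MvPolynomial (Fin N) ℂ :=
    ∑ j ∈ Finset.univ.filter (fun j : Fin N => j.val < b), X j with hzsum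
  set zbar : MvPolynomial (Fin N) ℂ := -(MvPolynomial.C ((b : ℂ))⁻¹ * zsum) with hzbar
  set γ : FVars N → MvPolynomial (Fin N) ℂ := Sum.elim (fun j : Fin N => X j + zbar)
    (fun o : Option (Fin N) => Option.elim o 0 (fun j : Fin N => X j)) with hγdef
  have hW : MvPolynomial.aeval
      (fun i : Fin N => X i + (if i.val < b then zbar else 0)) Pmin = Pmin := by
    set E : Polynomial (MvPolynomial (Fin N) ℂ) →ₐ[ℂ] MvPolynomial (Fin N) ℂ :=
      (Polynomial.aeval zbar).restrictScalars ℂ with hE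
    have h1 : E (MvPolynomial.aeval (psia N b) Pmin) =
        MvPolynomial.aeval (fun i => E (psia N b i)) Pmin :=
      MvPolynomial.comp_aeval_apply (psia N b) E Pmin
    have h2 : (fun i => E (psia N b i)) =
        fun i : Fin N => X i + (if i.val < b then zbar else 0) := by
      funext i
      unfold psia
      rw [map_add]
      have hc : E (Polynomial.C (X i : MvPolynomial (Fin N) ℂ)) = X i := by
        show Polynomial.aeval zbar _ = _
        rw [Polynomial.aeval_C]
        simp
      rw [hc, apply_ite E, map_zero]
      congr 1
      split_ifs with hi
      · show Polynomial.aeval zbar Polynomial.X = zbar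
        exact Polynomial.aeval_X _
      · rfl
    have h3 : E (Polynomial.C Pmin) = Pmin := by
      show Polynomial.aeval zbar _ = _
      rw [Polynomial.aeval_C]
      simp
    rw [← h2, ← h1, hinv, h3]
  have hγθ : ∀ i : Fin N,
      MvPolynomial.aeval γ (theta N b i) = X i + (if i.val < b then zbar else 0) := by
    intro i
    unfold theta
    by_cases hi : i.val < b
    · rw [if_pos hi, if_pos hi]
      unfold fuseXi
      by_cases hi2 : i.val + 1 < b
      · rw [if_pos hi2, MvPolynomial.aeval_X, hγdef]
        rfl
      · rw [if_neg hi2]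
        have hival : i.val + 1 = b := by omega
        rw [map_neg, map_sum]
        have hXj : ∀ j ∈ Finset.univ.filter (fun j : Fin N => j.val + 1 < b),
            MvPolynomial.aeval γ ((X (Sum.inl j)) : MvPolynomial (FVars N) ℂ)
              = X j + zbar := by
          intro j _
          rw [MvPolynomial.aeval_X, hγdef]
          rfl
        have hsc : (∑ j ∈ Finset.univ.filter (fun j : Fin N => j.val + 1 < b),
            MvPolynomial.aeval γ ((X (Sum.inl j)) : MvPolynomial (FVars N) ℂ))
            = ∑ j ∈ Finset.univ.filter (fun j : Fin N => j.val + 1 < b), (X j + zbar) :=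
          Finset.sum_congr rfl hXj
        rw [hsc, Finset.sum_add_distrib, Finset.sum_const]
        have hfiltIio : Finset.univ.filter (fun j : Fin N => j.val + 1 < b) =
            Finset.Iio i := by
          ext j
          simp only [Finset.mem_filter, Finset.mem_univ, true_and, Finset.mem_Iio, Fin.lt_def]
          omega
        have hcard : (Finset.univ.filter (fun j : Fin N => j.val + 1 < b)).card = i.val := by
          rw [hfiltIio, Fin.card_Iio]
        have hins : Finset.univ.filter (fun j : Fin N => j.val < b)
            = insert i (Finset.univ.filter (fun j : Fin N => j.val + 1 < b)) := by
          ext j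
          simp only [Finset.mem_filter, Finset.mem_univ, true_and, Finset.mem_insert, Fin.ext_iff]
          omega
        have hsum_split : zsum = X i +
            ∑ j ∈ Finset.univ.filter (fun j : Fin N => j.val + 1 < b), X j := by
          rw [hzsum, hins, Finset.sum_insert (by simp; omega)]
        have hCb : (MvPolynomial.C ((b : ℂ)) : MvPolynomial (Fin N) ℂ) *
            MvPolynomial.C ((b : ℂ))⁻¹ = 1 := by
          rw [← map_mul, mul_inv_cancel₀ (by exact_mod_cast (by omega : b ≠ 0)), map_one]
        rw [hcard, nsmul_eq_mul]
        have hcast : ((i.val : ℕ) : MvPolynomial (Fin N) ℂ) =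
            MvPolynomial.C ((b : ℂ) - 1) := by
          rw [← MvPolynomial.C_eq_coe_nat]
          congr 1
          have : (b : ℂ) = (i.val : ℂ) + 1 := by exact_mod_cast hival.symm
          rw [this]
          ring
        have hTz : ∑ j ∈ Finset.univ.filter (fun j : Fin N => j.val + 1 < b),
            (X j : MvPolynomial (Fin N) ℂ) = zsum - X i := by
          rw [hsum_split]
          ring
        rw [hcast, hTz, hzbar,
          show MvPolynomial.C ((b : ℂ) - 1) = MvPolynomial.C (b : ℂ) - 1 by
            rw [map_sub, map_one]]
        linear_combination zsum * hCb
    · rw [if_neg hi, if_neg hi, add_zero, map_sub, MvPolynomial.aeval_X, MvPolynomial.aeval_X,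
        hγdef]
      simp
  have hfinal : MvPolynomial.aeval γ (MvPolynomial.aeval (theta N b) Pmin)
      = MvPolynomial.aeval (fun i : Fin N => X i + (if i.val < b then zbar else 0)) Pmin := by
    rw [MvPolynomial.comp_aeval_apply (theta N b) (MvPolynomial.aeval γ) Pmin]
    have heq : (fun i : Fin N => MvPolynomial.aeval γ (theta N b i))
        = fun i : Fin N => X i + (if i.val < b then zbar else 0) := funext hγθ
    rw [heq]
  rw [← hW, ← hfinal, ← hQeq, hQ0, map_zero]
lemma homog_zero_of_inl {N : ℕ} {q : MvPolynomial (FVars N) ℂ}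
    (h : ∀ v ∈ q.vars, ∃ i, v = Sum.inl i) : q.IsWeightedHomogeneous (wz N) 0 := by
  intro mo hmo
  rw [Finsupp.weight_apply, Finsupp.sum]
  apply Finset.sum_eq_zero
  intro v hv
  have hvars : v ∈ q.vars := by
    rw [MvPolynomial.mem_vars]
    exact ⟨mo, MvPolynomial.mem_support_iff.mpr hmo, hv⟩
  obtain ⟨i, rfl⟩ := h v hvars
  simp [wz]

end Stmt10Aux

open Stmt10Aux

/-- for a homogeneous symmetric translation invariant polynomial
admitting derived polynomials for fusions of initial segments (sUFC),
`D_{a,1} = S_{a+1} - S_a`. Here `PderA` is the derived polynomial from fusing the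
first `a` variables, `D` is its order of vanishing along `z^{(a)} = z_{a+1}`, and
the sUFC hypothesis `hUFC` says that fusing `z^{(a)}` with `z_{a+1}` in `PderA`
(rewriting in `w = z^{(a)} - z_{a+1}` and the center of mass
`z^{(a+1)} = (a z^{(a)} + z_{a+1})/(a+1)`, extracting the coefficient of `w^D`)
recovers, up to a nonzero scalar, the derived polynomial `PderA1` of the direct
fusion of the first `a+1` variables. The difference variable `w` is stored in the
slot of `z_{a+1}` and the center of mass in the slot `Sum.inr none`. -/
theorem stmt10 (N a d : ℕ) (haN : a + 1 ≤ N) (P : MvPolynomial (Fin N) ℂ)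
    (hP : P ≠ 0) (hhom : P.IsHomogeneous d) (hsymm : SymmPoly N P) (hTI : TransInv N P)
    (RA PderA : MvPolynomial (FVars N) ℂ)
    (hRA : ∀ v ∈ RA.vars, ∃ i, v = Sum.inl i)
    (hPdA : ∀ v ∈ PderA.vars, ∃ o, v = Sum.inr o)
    (hfacA : Qcoeff N a P (minDeg N P a) = RA * PderA)
    (RA1 PderA1 : MvPolynomial (FVars N) ℂ)
    (hRA1 : ∀ v ∈ RA1.vars, ∃ i, v = Sum.inl i)
    (hPdA1 : ∀ v ∈ PderA1.vars, ∃ o, v = Sum.inr o)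
    (hfacA1 : Qcoeff N (a + 1) P (minDeg N P (a + 1)) = RA1 * PderA1)
    (D : ℕ) (M : MvPolynomial (FVars N) ℂ)
    (hchi : MvPolynomial.aeval (fun v : FVars N =>
        if v = Sum.inr none then
          X (Sum.inr none) +
            MvPolynomial.C ((1 : ℂ) / (a + 1)) * X (Sum.inr (some ⟨a, haN⟩))
        else if v = Sum.inr (some ⟨a, haN⟩) then
          X (Sum.inr none) -
            MvPolynomial.C ((a : ℂ) / (a + 1)) * X (Sum.inr (some ⟨a, haN⟩))
        else X v) PderA = X (Sum.inr (some ⟨a, haN⟩)) ^ D * M)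
    (hMmax : ¬ (X (Sum.inr (some ⟨a, haN⟩)) : MvPolynomial (FVars N) ℂ) ∣ M)
    (hUFC : ∃ c : ℂ, c ≠ 0 ∧
      MvPolynomial.aeval (fun v : FVars N =>
          if v = Sum.inr (some ⟨a, haN⟩) then 0 else X v) M =
        MvPolynomial.C c * PderA1) :
    D + minDeg N P a = minDeg N P (a + 1) := by
  classical
  -- the two Q-coefficients are nonzero
  have hQa_ne : Qcoeff N a P (minDeg N P a) ≠ 0 := Qcoeff_minDeg_ne_zero N a P hP hTI
  have hQa1_ne : Qcoeff N (a + 1) P (minDeg N P (a + 1)) ≠ 0 :=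
    Qcoeff_minDeg_ne_zero N (a + 1) P hP hTI
  obtain ⟨hRA_ne, hPderA_ne⟩ := mul_ne_zero_iff.mp (hfacA ▸ hQa_ne)
  obtain ⟨hRA1_ne, hPderA1_ne⟩ := mul_ne_zero_iff.mp (hfacA1 ▸ hQa1_ne)
  -- homogeneity of the Q-coefficients
  obtain ⟨mo1, hmo1⟩ := MvPolynomial.ne_zero_iff.mp hQa_ne
  obtain ⟨mo1', hmo1'⟩ := MvPolynomial.ne_zero_iff.mp hQa1_ne
  set nA := (Finsupp.weight (wz N)) mo1 with hnA
  set nA1 := (Finsupp.weight (wz N)) mo1' with hnA1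
  have hdA : minDeg N P a + nA = d := Qcoeff_supp hhom _ mo1 hmo1
  have hdA1 : minDeg N P (a + 1) + nA1 = d := Qcoeff_supp hhom _ mo1' hmo1'
  have hQahom : (Qcoeff N a P (minDeg N P a)).IsWeightedHomogeneous (wz N) nA := by
    intro mo h
    have := Qcoeff_supp hhom _ mo h
    omega
  have hQa1hom : (Qcoeff N (a + 1) P (minDeg N P (a + 1))).IsWeightedHomogeneous (wz N) nA1 := by
    intro mo h
    have := Qcoeff_supp hhom _ mo h
    omega
  -- derived polynomials are homogeneous
  have hPderAhom : PderA.IsWeightedHomogeneous (wz N) nA := by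
    intro mo h
    have := homog_factor (homog_zero_of_inl hRA) (hfacA ▸ hQahom) hRA_ne mo h
    omega
  have hPderA1facts : ∀ mo : FVars N →₀ ℕ, PderA1.coeff mo ≠ 0 →
      (Finsupp.weight (wz N)) mo = nA1 := by
    intro mo h
    have := homog_factor (homog_zero_of_inl hRA1) (hfacA1 ▸ hQa1hom) hRA1_ne mo h
    omega
  -- the substituted polynomial is homogeneous
  have hφ : ∀ v : FVars N, IsWeightedHomogeneous (wz N)
      ((fun v : FVars N =>
        if v = Sum.inr none then
          X (Sum.inr none) +
            MvPolynomial.C ((1 : ℂ) / (a + 1)) * X (Sum.inr (some ⟨a, haN⟩))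
        else if v = Sum.inr (some ⟨a, haN⟩) then
          X (Sum.inr none) -
            MvPolynomial.C ((a : ℂ) / (a + 1)) * X (Sum.inr (some ⟨a, haN⟩))
        else X v) v) (wz N v) := by
    intro v
    dsimp only
    by_cases h1 : v = Sum.inr none
    · rw [if_pos h1, h1]
      have hx := isWeightedHomogeneous_X ℂ (wz N) (Sum.inr (none : Option (Fin N)))
      have hcx := (isWeightedHomogeneous_C (wz N) ((1 : ℂ) / (a + 1))).mul
        (isWeightedHomogeneous_X ℂ (wz N) (Sum.inr (some ⟨a, haN⟩)))
      exact hx.add hcx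
    · rw [if_neg h1]
      by_cases h2 : v = Sum.inr (some ⟨a, haN⟩)
      · rw [if_pos h2, h2, sub_eq_add_neg]
        apply IsWeightedHomogeneous.add
        · exact isWeightedHomogeneous_X ℂ (wz N) (Sum.inr (none : Option (Fin N)))
        · rw [← mem_weightedHomogeneousSubmodule]
          apply Submodule.neg_mem
          rw [mem_weightedHomogeneousSubmodule]
          exact (isWeightedHomogeneous_C (wz N) ((a : ℂ) / (a + 1))).mul
            (isWeightedHomogeneous_X ℂ (wz N) (Sum.inr (some ⟨a, haN⟩)))
      · rw [if_neg h2]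
        exact isWeightedHomogeneous_X ℂ (wz N) v
  have hXDM : ((X (Sum.inr (some ⟨a, haN⟩)) : MvPolynomial (FVars N) ℂ) ^ D * M).IsWeightedHomogeneous (wz N) nA := by
    rw [← hchi]
    exact homog_aeval hφ hPderAhom
  have hXDhom : ((X (Sum.inr (some ⟨a, haN⟩)) : MvPolynomial (FVars N) ℂ) ^ D).IsWeightedHomogeneous
      (wz N) D := by
    rw [MvPolynomial.X_pow_eq_monomial]
    apply isWeightedHomogeneous_monomial
    rw [Finsupp.weight_apply, Finsupp.sum_single_index] <;> simp [wz]
  have hXD_ne : ((X (Sum.inr (some ⟨a, haN⟩)) : MvPolynomial (FVars N) ℂ) ^ D) ≠ 0 :=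
    pow_ne_zero _ (MvPolynomial.X_ne_zero _)
  have hM_ne : M ≠ 0 := fun h0 => hMmax (h0 ▸ dvd_zero _)
  have hMfacts := homog_factor hXDhom hXDM hXD_ne
  obtain ⟨mo2, hmo2⟩ := MvPolynomial.ne_zero_iff.mp hM_ne
  set eM := (Finsupp.weight (wz N)) mo2 with heM
  have hDeM : D + eM = nA := hMfacts mo2 hmo2
  have hMhom : M.IsWeightedHomogeneous (wz N) eM := by
    intro mo h
    have := hMfacts mo h
    omega
  -- setting w = 0
  obtain ⟨c, hc0, hUFCeq⟩ := hUFC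
  have hψ : ∀ v : FVars N, IsWeightedHomogeneous (wz N)
      ((fun v : FVars N => if v = Sum.inr (some ⟨a, haN⟩) then (0 : MvPolynomial (FVars N) ℂ) else X v) v) (wz N v) := by
    intro v
    dsimp only
    by_cases h : v = Sum.inr (some ⟨a, haN⟩)
    · rw [if_pos h]
      exact isWeightedHomogeneous_zero ℂ _ _
    · rw [if_neg h]
      exact isWeightedHomogeneous_X ℂ _ v
  have hCPhom : (MvPolynomial.C c * PderA1).IsWeightedHomogeneous (wz N) eM := by
    rw [← hUFCeq]
    exact homog_aeval hψ hMhom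
  have hC_ne : (MvPolynomial.C c : MvPolynomial (FVars N) ℂ) ≠ 0 := by
    intro h0
    exact hc0 (MvPolynomial.C_injective _ _ (by rw [h0, map_zero]))
  have hPderA1facts2 := homog_factor (isWeightedHomogeneous_C (wz N) c) hCPhom hC_ne
  obtain ⟨mo3, hmo3⟩ := MvPolynomial.ne_zero_iff.mp hPderA1_ne
  have h1 := hPderA1facts mo3 hmo3
  have h2 := hPderA1facts2 mo3 hmo3
  omega
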